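/- Let f : ℝ → ℝ be a nonnegative even continuous h-convex function, where h is nonnegative, integrable on [0,1], and super-additive (h(x+y) ≥ h(x)+h(y)). Then for all x, y: (1/2)∫₀¹ [f(tx)+f(ty)] dt ≤ h(1)·(∫₀¹ h(t) dt)·[f(x)+f(y)]. -/

import Mathlib

open MeasureTheory intervalIntegral

theorem even_hconvex_integral_inequality_superadditive
    (h : ℝ → ℝ) (hh : ∀ t ∈ Set.Icc (0:ℝ) 1, 0 ≤ h t)
    (hint : IntervalIntegrable h MeasureTheory.volume 0 1)
    (hsuper : ∀ a b : ℝ, 0 ≤ a → 0 ≤ b → a + b ≤ 1 → h a + h b ≤ h (a + b))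
    (f : ℝ → ℝ) (hf : ∀ x : ℝ, 0 ≤ f x) (hfc : Continuous f)
    (heven : ∀ x : ℝ, f (-x) = f x)
    (hconv : ∀ x y : ℝ, ∀ t ∈ Set.Icc (0:ℝ) 1,
        f (t * x + (1 - t) * y) ≤ h t * f x + h (1 - t) * f y) :
    ∀ x y : ℝ,
      (1 / 2) * ∫ t in (0:ℝ)..1, (f (t * x) + f (t * y)) ≤
        h 1 * (∫ t in (0:ℝ)..1, h t) * (f x + f y) := by
  intro x y
  set I := ∫ t in (0:ℝ)..1, h t with hI
  have hInn : 0 ≤ I := intervalIntegral.integral_nonneg (by norm_num) (fun t ht => hh t ht)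
  -- integrability of the affine compositions
  have g1int : IntervalIntegrable (fun t => h (1/2 * t + 1/2)) volume 0 1 := by
    have h1 := (hint.comp_mul_left (c := 1/2)).comp_add_right 1
    have h2 : Set.uIcc (0:ℝ) 1 ⊆ Set.uIcc ((0:ℝ)/(1/2) - 1) ((1:ℝ)/(1/2) - 1) := by
      norm_num
      exact Set.Icc_subset_Icc (by norm_num) (by norm_num)
    have h3 := h1.mono_set h2
    have h4 : (fun t : ℝ => h (1/2 * t + 1/2)) = fun x : ℝ => h (1/2 * (x + 1)) := by
      funext t; ring_nf
    rw [h4]; exact h3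
  have g2int : IntervalIntegrable (fun t => h (-(1/2) * t + 1/2)) volume 0 1 := by
    have h1 := (hint.comp_mul_left (c := -(1/2))).comp_add_right (-1)
    have h2 : Set.uIcc (0:ℝ) 1 ⊆ Set.uIcc ((0:ℝ)/(-(1/2)) - (-1)) ((1:ℝ)/(-(1/2)) - (-1)) := by
      norm_num
      exact Set.Icc_subset_Icc (by norm_num) (by norm_num)
    have h3 := h1.mono_set h2
    have h4 : (fun t : ℝ => h (-(1/2) * t + 1/2)) = fun x : ℝ => h (-(1/2) * (x + -1)) := by
      funext t; ring_nf
    rw [h4]; exact h3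
  have hintA : IntervalIntegrable h volume 0 (1/2) :=
    hint.mono_set (by
      rw [Set.uIcc_of_le (by norm_num : (0:ℝ) ≤ 1/2), Set.uIcc_of_le (by norm_num : (0:ℝ) ≤ 1)]
      exact Set.Icc_subset_Icc (by norm_num) (by norm_num))
  have hintB : IntervalIntegrable h volume (1/2) 1 :=
    hint.mono_set (by
      rw [Set.uIcc_of_le (by norm_num : (1/2:ℝ) ≤ 1), Set.uIcc_of_le (by norm_num : (0:ℝ) ≤ 1)]
      exact Set.Icc_subset_Icc (by norm_num) (by norm_num))
  -- value of the integral of the sum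
  have gval : (∫ t in (0:ℝ)..1, (h (1/2 * t + 1/2) + h (-(1/2) * t + 1/2))) = 2 * I := by
    rw [intervalIntegral.integral_add g1int g2int]
    rw [intervalIntegral.integral_comp_mul_add h (by norm_num : (1/2:ℝ) ≠ 0) (1/2)]
    rw [intervalIntegral.integral_comp_mul_add h (by norm_num : (-(1/2):ℝ) ≠ 0) (1/2)]
    norm_num
    have adj : (∫ t in (0:ℝ)..(1/2:ℝ), h t) + ∫ t in (1/2:ℝ)..1, h t = I :=
      intervalIntegral.integral_add_adjacent_intervals hintA hintB
    have symm : (∫ t in (1/2:ℝ)..0, h t) = -∫ t in (0:ℝ)..(1/2:ℝ), h t :=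
      intervalIntegral.integral_symm _ _
    rw [symm]
    linarith
  -- pointwise bound
  have key : ∀ z : ℝ, ∀ t ∈ Set.Icc (0:ℝ) 1,
      f (t * z) ≤ (h (1/2 * t + 1/2) + h (-(1/2) * t + 1/2)) * f z := by
    intro z t ht
    obtain ⟨ht0, ht1⟩ := ht
    have hmem : (1/2 * t + 1/2 : ℝ) ∈ Set.Icc (0:ℝ) 1 := ⟨by linarith, by linarith⟩
    have hc := hconv z (-z) (1/2 * t + 1/2) hmem
    have e1 : (1/2 * t + 1/2) * z + (1 - (1/2 * t + 1/2)) * (-z) = t * z := by ring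
    have e2 : (1 : ℝ) - (1/2 * t + 1/2) = -(1/2) * t + 1/2 := by ring
    rw [e1, e2, heven] at hc
    linarith
  -- integral bound for a single variable
  have ibound : ∀ z : ℝ, (∫ t in (0:ℝ)..1, f (t * z)) ≤ 2 * I * f z := by
    intro z
    have fint : IntervalIntegrable (fun t => f (t * z)) volume 0 1 :=
      (hfc.comp (continuous_id.mul continuous_const)).intervalIntegrable 0 1
    have gfint : IntervalIntegrable
        (fun t => (h (1/2 * t + 1/2) + h (-(1/2) * t + 1/2)) * f z) volume 0 1 :=
      (g1int.add g2int).mul_const _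
    have hm := intervalIntegral.integral_mono_on (by norm_num) fint gfint
      (fun t ht => key z t ht)
    rw [intervalIntegral.integral_mul_const, gval] at hm
    exact hm
  have fxint : IntervalIntegrable (fun t => f (t * x)) volume 0 1 :=
    (hfc.comp (continuous_id.mul continuous_const)).intervalIntegrable 0 1
  have fyint : IntervalIntegrable (fun t => f (t * y)) volume 0 1 :=
    (hfc.comp (continuous_id.mul continuous_const)).intervalIntegrable 0 1
  rw [intervalIntegral.integral_add fxint fyint]
  by_cases h1 : 1 ≤ h 1
  · have bx := ibound x
    have by' := ibound y
    have hfx := hf x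
    have hfy := hf y
    nlinarith [mul_nonneg hInn (add_nonneg hfx hfy)]
  · -- then f ≡ 0
    push_neg at h1
    have hzero : ∀ z : ℝ, f z = 0 := by
      intro z
      have hmem : (1/2 : ℝ) ∈ Set.Icc (0:ℝ) 1 := by norm_num
      have hc := hconv z z (1/2) hmem
      have e : (1/2 : ℝ) * z + (1 - 1/2) * z = z := by ring
      rw [e] at hc
      have hs := hsuper (1/2) (1/2) (by norm_num) (by norm_num) (by norm_num)
      norm_num at hs hc
      have hfz := hf z
      nlinarith
    simp [hzero]
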